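/- For all natural numbers k and b with 2 ≤ b ≤ k/2 and b dividing k, one has ln(k!) − ln(b!) − b·ln((k/b)!) ≥ (k−1)·ln b − b·ln k. -/

import Mathlib

open Real

private lemma log_succ_sub_log_le (n : ℕ) (hn : 1 ≤ n) :
    Real.log (n + 1) - Real.log n ≤ 1 / (n : ℝ) := by
  have hn' : (0 : ℝ) < n := by exact_mod_cast hn
  have h1 : (0 : ℝ) < ((n : ℝ) + 1) / n := by positivity
  have h2 := Real.log_le_sub_one_of_pos h1
  rw [Real.log_div (by positivity) (ne_of_gt hn')] at h2
  have h3 : ((n : ℝ) + 1) / n - 1 = 1 / n := by field_simp; ring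
  linarith

private lemma one_div_le_log_succ_sub_log (n : ℕ) (hn : 1 ≤ n) :
    1 / ((n : ℝ) + 1) ≤ Real.log (n + 1) - Real.log n := by
  have hn' : (0 : ℝ) < n := by exact_mod_cast hn
  have h1 : (0 : ℝ) < (n : ℝ) / (n + 1) := by positivity
  have h2 := Real.log_le_sub_one_of_pos h1
  rw [Real.log_div (ne_of_gt hn') (by positivity)] at h2
  have h3 : (n : ℝ) / (n + 1) - 1 = -(1 / (n + 1)) := by field_simp; ring
  linarith

private lemma log_factorial_lower (n : ℕ) (hn : 1 ≤ n) :
    (n : ℝ) * Real.log n - n + 1 ≤ Real.log (Nat.factorial n) := by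
  induction n, hn using Nat.le_induction with
  | base => simp
  | succ n hn ih =>
    have hn' : (0 : ℝ) < n := by exact_mod_cast hn
    have hfac : Real.log (Nat.factorial (n + 1)) =
        Real.log (n + 1) + Real.log (Nat.factorial n) := by
      rw [Nat.factorial_succ]
      push_cast
      rw [Real.log_mul (by positivity) (by positivity)]
    have haux := log_succ_sub_log_le n hn
    have hmul : (n : ℝ) * (Real.log (n + 1) - Real.log n) ≤ 1 := by
      have := mul_le_mul_of_nonneg_left haux (le_of_lt hn')
      rwa [mul_one_div_cancel (ne_of_gt hn')] at this
    push_cast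
    push_cast at ih
    nlinarith [hfac, ih, hmul]

private lemma log_factorial_upper (n : ℕ) (hn : 1 ≤ n) :
    Real.log (Nat.factorial n) ≤ ((n : ℝ) + 1) * Real.log n - n + 1 := by
  induction n, hn using Nat.le_induction with
  | base => simp
  | succ n hn ih =>
    have hn' : (0 : ℝ) < n := by exact_mod_cast hn
    have hfac : Real.log (Nat.factorial (n + 1)) =
        Real.log (n + 1) + Real.log (Nat.factorial n) := by
      rw [Nat.factorial_succ]
      push_cast
      rw [Real.log_mul (by positivity) (by positivity)]
    have haux := one_div_le_log_succ_sub_log n hn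
    have hmul : 1 ≤ ((n : ℝ) + 1) * (Real.log (n + 1) - Real.log n) := by
      have := mul_le_mul_of_nonneg_left haux (by positivity : (0:ℝ) ≤ (n : ℝ) + 1)
      rwa [mul_one_div_cancel (by positivity : ((n : ℝ) + 1) ≠ 0)] at this
    push_cast
    push_cast at ih
    nlinarith [hfac, ih, hmul]

/-- For all `k, b` with `2 ≤ b ≤ k/2` and `b ∣ k`, one has
`ln(k!) − ln(b!) − b·ln((k/b)!) ≥ (k−1)·ln b − b·ln k`. -/
theorem log_index_wreath_lower_bound (k b : ℕ) (hb : 2 ≤ b) (hbk : 2 * b ≤ k)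
    (hdvd : b ∣ k) :
    Real.log (Nat.factorial k) - Real.log (Nat.factorial b)
        - (b : ℝ) * Real.log (Nat.factorial (k / b)) ≥
      ((k : ℝ) - 1) * Real.log b - (b : ℝ) * Real.log k := by
  set m := k / b with hm
  have hb0 : 0 < b := by omega
  have hkbm : k = b * m := (Nat.mul_div_cancel' hdvd).symm
  have hm2 : 2 ≤ m := by
    rw [hm, Nat.le_div_iff_mul_le hb0]; omega
  have hk1 : 1 ≤ k := by omega
  have hb1 : 1 ≤ b := by omega
  have hm1 : 1 ≤ m := by omega
  have e1 : (k : ℝ) = (b : ℝ) * m := by exact_mod_cast congrArg (Nat.cast (R := ℝ)) hkbm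
  have hbR : (0 : ℝ) < b := by exact_mod_cast hb0
  have hmR : (0 : ℝ) < m := by exact_mod_cast hm1
  have e2 : Real.log k = Real.log b + Real.log m := by
    rw [e1, Real.log_mul (ne_of_gt hbR) (ne_of_gt hmR)]
  have h1 := log_factorial_lower k hk1
  have h2 := log_factorial_upper b hb1
  have h3 := log_factorial_upper m hm1
  have h3' : (b : ℝ) * Real.log (Nat.factorial m) ≤
      (b : ℝ) * (((m : ℝ) + 1) * Real.log m - m + 1) :=
    mul_le_mul_of_nonneg_left h3 (le_of_lt hbR)
  have key : ((k : ℝ) * Real.log k - k + 1) - (((b : ℝ) + 1) * Real.log b - b + 1)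
      - (b : ℝ) * (((m : ℝ) + 1) * Real.log m - m + 1)
      = ((k : ℝ) - 1) * Real.log b - (b : ℝ) * Real.log k := by
    rw [e2, e1]; ring
  linarith [h1, h2, h3', key]
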